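/- Assume each X_t is a Banach space. Then the process U(t,τ) is totally dissipative if and only if there exists a uniformly bounded pullback attracting family of compact sets (i.e., 𝕂 ≠ ∅). -/

import Mathlib

open Filter Metric Set Topology

/-- A family of sets is uniformly bounded. -/
def UnifBdd {X : ℝ → Type*} [∀ t, NormedAddCommGroup (X t)] (C : ∀ t, Set (X t)) : Prop :=
  ∃ R > 0, ∀ t, C t ⊆ closedBall (0 : X t) R

/-- Pullback absorbing family for a process `U`. -/
def PullbackAbsorbing {X : ℝ → Type*} [∀ t, NormedAddCommGroup (X t)]
    (U : ∀ t τ : ℝ, X τ → X t) (B : ∀ t, Set (X t)) : Prop :=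
  UnifBdd B ∧ ∀ t : ℝ, ∀ R > 0, ∃ t0 ≤ t, ∀ τ ≤ t0, U t τ '' closedBall 0 R ⊆ B t

/-- Pullback attracting family: every ε-neighborhood family is pullback absorbing. -/
def PullbackAttracting {X : ℝ → Type*} [∀ t, NormedAddCommGroup (X t)]
    (U : ∀ t τ : ℝ, X τ → X t) (K : ∀ t, Set (X t)) : Prop :=
  UnifBdd K ∧ ∀ ε > 0, PullbackAbsorbing U (fun t => thickening ε (K t))

/-- Set of subsequential limits of a sequence. -/
def LimSet {Y : Type*} [NormedAddCommGroup Y] (y : ℕ → Y) : Set Y :=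
  {x | ∃ φ : ℕ → ℕ, StrictMono φ ∧ Tendsto (y ∘ φ) atTop (𝓝 x)}

/-- `A*_t`: union of subsequential limit sets of sequences `U t τₙ xₙ` with
`τₙ → -∞` and `xₙ` uniformly bounded. -/
def AStar {X : ℝ → Type*} [∀ t, NormedAddCommGroup (X t)]
    (U : ∀ t τ : ℝ, X τ → X t) (t : ℝ) : Set (X t) :=
  {x | ∃ (τ : ℕ → ℝ) (xs : ∀ n, X (τ n)),
      Tendsto τ atTop atBot ∧ (∃ R, ∀ n, ‖xs n‖ ≤ R) ∧
      x ∈ LimSet (fun n => U t (τ n) (xs n))}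

/-- A thickening of a set contained in a closed ball lies in a larger closed ball. -/
lemma aux_thickening_subset_closedBall {Y : Type*} [NormedAddCommGroup Y] {s : Set Y}
    {R ε : ℝ} (h : s ⊆ closedBall 0 R) : thickening ε s ⊆ closedBall 0 (R + ε) := by
  intro x hx
  obtain ⟨z, hz, hd⟩ := mem_thickening_iff.1 hx
  have hz' : dist z 0 ≤ R := mem_closedBall.1 (h hz)
  rw [mem_closedBall]
  calc dist x 0 ≤ dist x z + dist z 0 := dist_triangle _ _ _
    _ ≤ ε + R := add_le_add hd.le hz'
    _ = R + ε := add_comm _ _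

/-- The sequence `fun n => t - n` tends to `-∞`. -/
lemma aux_tendsto_sub_nat (t : ℝ) : Tendsto (fun n : ℕ => t - (n : ℝ)) atTop atBot := by
  have h1 : Tendsto (fun n : ℕ => (n : ℝ)) atTop atTop := tendsto_natCast_atTop_atTop
  simpa [sub_eq_add_neg] using tendsto_atBot_add_const_left atTop t
    (tendsto_neg_atBot_iff.2 h1)

/-- Key compactness lemma: under total dissipativity, any sequence `U t τₙ xₙ` with
`τₙ → -∞` and uniformly bounded `xₙ` has a convergent subsequence. -/
lemma aux_exists_limset {X : ℝ → Type*} [∀ t, NormedAddCommGroup (X t)]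
    [∀ t, CompleteSpace (X t)] (U : ∀ t τ : ℝ, X τ → X t)
    (hF : ∀ ε > (0:ℝ), ∃ F : ∀ t, Set (X t), (∀ t, (F t).Finite) ∧
        PullbackAbsorbing U (fun t => thickening ε (F t)))
    (t R : ℝ) (τ : ℕ → ℝ) (xs : ∀ n, X (τ n))
    (hτ : Tendsto τ atTop atBot) (hxs : ∀ n, ‖xs n‖ ≤ R) :
    ∃ a, a ∈ LimSet (fun n => U t (τ n) (xs n)) := by
  set y : ℕ → X t := fun n => U t (τ n) (xs n) with hy
  have hR' : (0:ℝ) < max R 1 := lt_of_lt_of_le zero_lt_one (le_max_right R 1)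
  have htb : TotallyBounded (Set.range y) := by
    rw [Metric.totallyBounded_iff]
    intro ε hε
    obtain ⟨F, hFfin, _, habs⟩ := hF (ε/2) (half_pos hε)
    obtain ⟨t0, _, hcon⟩ := habs t (max R 1) hR'
    obtain ⟨N, hN⟩ := Filter.eventually_atTop.1 (hτ.eventually_le_atBot t0)
    refine ⟨F t ∪ (y '' {i | i < N}), (hFfin t).union ((Set.finite_Iio N).image y), ?_⟩
    rintro _ ⟨n, rfl⟩
    rcases lt_or_ge n N with hn | hn
    · exact Set.mem_biUnion (Set.mem_union_right _ ⟨n, hn, rfl⟩) (mem_ball_self hε)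
    · have hmem : y n ∈ thickening (ε/2) (F t) :=
        hcon (τ n) (hN n hn)
          ⟨xs n, mem_closedBall_zero_iff.2 ((hxs n).trans (le_max_left R 1)), rfl⟩
      obtain ⟨z, hz, hd⟩ := mem_thickening_iff.1 hmem
      exact Set.mem_biUnion (Set.mem_union_left _ hz)
        (mem_ball.2 (hd.trans (half_lt_self hε)))
  have hc : IsCompact (closure (Set.range y)) :=
    TotallyBounded.isCompact_of_isClosed htb.closure isClosed_closure
  obtain ⟨a, -, φ, hφ, hconv⟩ :=
    hc.tendsto_subseq (fun n => subset_closure (Set.mem_range_self n))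
  exact ⟨a, φ, hφ, hconv⟩

/-- `A*_t` lies in the closure of any absorbing thickened family. -/
lemma aux_astar_subset {X : ℝ → Type*} [∀ t, NormedAddCommGroup (X t)]
    (U : ∀ t τ : ℝ, X τ → X t) (t ε : ℝ) (B : Set (X t))
    (habs : ∀ R > (0:ℝ), ∃ t0 ≤ t, ∀ τ ≤ t0, U t τ '' closedBall 0 R ⊆ B) :
    AStar U t ⊆ closure B := by
  rintro x ⟨τ, xs, hτ, ⟨R, hR⟩, φ, hφ, hconv⟩
  have hR' : (0:ℝ) < max R 1 := lt_of_lt_of_le zero_lt_one (le_max_right R 1)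
  obtain ⟨t0, _, hcon⟩ := habs (max R 1) hR'
  refine mem_closure_of_tendsto hconv ?_
  have hev : ∀ᶠ n in atTop, τ (φ n) ≤ t0 :=
    (hτ.comp hφ.tendsto_atTop).eventually_le_atBot t0
  filter_upwards [hev] with n hn
  exact hcon _ hn
    ⟨xs (φ n), mem_closedBall_zero_iff.2 ((hR _).trans (le_max_left R 1)), rfl⟩

theorem stmt4 {X : ℝ → Type*} [∀ t, NormedAddCommGroup (X t)] [∀ t, CompleteSpace (X t)]
    (U : ∀ t τ : ℝ, X τ → X t)
    (hU1 : ∀ (t : ℝ) (x : X t), U t t x = x)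
    (hU2 : ∀ {t τ σ : ℝ}, σ ≤ τ → τ ≤ t → ∀ x : X σ, U t τ (U τ σ x) = U t σ x) :
    (∀ ε > (0:ℝ), ∃ F : ∀ t, Set (X t), (∀ t, (F t).Finite) ∧
        PullbackAbsorbing U (fun t => thickening ε (F t))) ↔
    ∃ K : ∀ t, Set (X t), (∀ t, IsCompact (K t)) ∧ PullbackAttracting U K := by
  constructor
  · intro hF
    refine ⟨fun t => closure (AStar U t), ?_, ?_, ?_⟩
    · -- compactness of `K t`
      intro t
      have htb : TotallyBounded (AStar U t) := by
        rw [Metric.totallyBounded_iff]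
        intro ε hε
        obtain ⟨F, hFfin, _, habs⟩ := hF (ε/2) (half_pos hε)
        refine ⟨F t, hFfin t, ?_⟩
        have h1 : AStar U t ⊆ closure (thickening (ε/2) (F t)) :=
          aux_astar_subset U t (ε/2) _ (habs t)
        have h2 : closure (thickening (ε/2) (F t)) ⊆ cthickening (ε/2) (F t) :=
          (isClosed_cthickening.closure_subset_iff).2 (thickening_subset_cthickening _ _)
        have h3 : cthickening (ε/2) (F t) ⊆ thickening ε (F t) :=
          cthickening_subset_thickening' hε (half_lt_self hε) _
        calc AStar U t ⊆ cthickening (ε/2) (F t) := h1.trans h2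
          _ ⊆ thickening ε (F t) := h3
          _ = ⋃ x ∈ F t, ball x ε := thickening_eq_biUnion_ball
      exact TotallyBounded.isCompact_of_isClosed htb.closure isClosed_closure
    · -- uniform boundedness of `K`
      obtain ⟨F1, _, ⟨R₀, hR₀, hbdd⟩, habs1⟩ := hF 1 one_pos
      refine ⟨R₀, hR₀, fun t => ?_⟩
      have h1 : AStar U t ⊆ closure (thickening 1 (F1 t)) :=
        aux_astar_subset U t 1 _ (habs1 t)
      have h2 : closure (thickening 1 (F1 t)) ⊆ closedBall 0 R₀ :=
        (isClosed_closedBall.closure_subset_iff).2 (hbdd t)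
      exact (isClosed_closedBall.closure_subset_iff).2 (h1.trans h2)
    · -- attraction
      intro ε hε
      -- nonemptiness of `K t`
      have hKne : ∀ t, (closure (AStar U t)).Nonempty := by
        intro t
        obtain ⟨a, ha⟩ := aux_exists_limset U hF t 0 (fun n => t - n) (fun n => 0)
          (aux_tendsto_sub_nat t) (fun n => by simp)
        exact ⟨a, subset_closure ⟨_, _, aux_tendsto_sub_nat t, ⟨0, fun n => by simp⟩, ha⟩⟩
      constructor
      · -- uniform boundedness of the thickened family
        obtain ⟨F1, _, ⟨R₀, hR₀, hbdd⟩, habs1⟩ := hF 1 one_pos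
        refine ⟨R₀ + ε, by linarith, fun t => ?_⟩
        have hK : closure (AStar U t) ⊆ closedBall 0 R₀ := by
          have h1 : AStar U t ⊆ closure (thickening 1 (F1 t)) :=
            aux_astar_subset U t 1 _ (habs1 t)
          exact (isClosed_closedBall.closure_subset_iff).2
            (h1.trans ((isClosed_closedBall.closure_subset_iff).2 (hbdd t)))
        exact aux_thickening_subset_closedBall hK
      · -- absorbing property of the thickened family, by contradiction
        intro t R hR
        by_contra hcon
        push_neg at hcon
        have h' : ∀ n : ℕ, ∃ τ' ≤ min t (-(n:ℝ)), ∃ x : X τ',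
            ‖x‖ ≤ R ∧ U t τ' x ∉ thickening ε (closure (AStar U t)) := by
          intro n
          obtain ⟨τ', hτ', hsub⟩ := hcon (min t (-(n:ℝ))) (min_le_left _ _)
          obtain ⟨_, ⟨x, hx, rfl⟩, hy⟩ := Set.not_subset.1 hsub
          exact ⟨τ', hτ', x, mem_closedBall_zero_iff.1 hx, hy⟩
        choose τ hτle xs hxs hy using h'
        have hτ : Tendsto τ atTop atBot := by
          refine tendsto_atBot_mono (fun n => (hτle n).trans (min_le_right _ _)) ?_
          exact tendsto_neg_atBot_iff.2 tendsto_natCast_atTop_atTop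
        obtain ⟨a, φ, hφ, hconv⟩ := aux_exists_limset U hF t R τ xs hτ hxs
        have haK : a ∈ closure (AStar U t) :=
          subset_closure ⟨τ, xs, hτ, ⟨R, hxs⟩, φ, hφ, hconv⟩
        have hεle : ∀ n, ε ≤ infDist (U t (τ (φ n)) (xs (φ n))) (closure (AStar U t)) := by
          intro n
          by_contra hlt
          exact hy (φ n) ((mem_thickening_iff_infDist_lt ⟨a, haK⟩).2 (not_le.1 hlt))
        have htend : Tendsto
            (fun n => infDist (U t (τ (φ n)) (xs (φ n))) (closure (AStar U t)))
            atTop (𝓝 (infDist a (closure (AStar U t)))) :=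
          ((continuous_infDist_pt _).continuousAt.tendsto).comp hconv
        have : ε ≤ infDist a (closure (AStar U t)) := ge_of_tendsto' htend hεle
        rw [infDist_zero_of_mem haK] at this
        linarith
  · rintro ⟨K, hKc, ⟨R₀, hR₀, hKb⟩, hatt⟩
    intro ε hε
    have hcov : ∀ t, ∃ F : Set (X t), F ⊆ K t ∧ F.Finite ∧ K t ⊆ ⋃ x ∈ F, ball x (ε/2) :=
      fun t => (hKc t).finite_cover_balls (half_pos hε)
    choose F hFK hFfin hFcov using hcov
    have hKF : ∀ t, thickening (ε/2) (K t) ⊆ thickening ε (F t) := by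
      intro t x hx
      obtain ⟨k, hk, hdk⟩ := mem_thickening_iff.1 hx
      obtain ⟨f, hf, hkf⟩ := Set.mem_iUnion₂.1 (hFcov t hk)
      refine mem_thickening_iff.2 ⟨f, hf, ?_⟩
      calc dist x f ≤ dist x k + dist k f := dist_triangle _ _ _
        _ < ε/2 + ε/2 := add_lt_add hdk (mem_ball.1 hkf)
        _ = ε := add_halves ε
    refine ⟨F, hFfin, ⟨R₀ + ε, by linarith, fun t => ?_⟩, fun t R hR => ?_⟩
    · exact aux_thickening_subset_closedBall ((hFK t).trans (hKb t))
    · obtain ⟨-, habs⟩ := hatt (ε/2) (half_pos hε)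
      obtain ⟨t0, ht0, hcon⟩ := habs t R hR
      exact ⟨t0, ht0, fun τ hτ => (hcon τ hτ).trans (hKF t)⟩
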